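/- Let G be a graph on n ≥ 2 vertices, let σ be a permutation of V, let ς > 0 and let c > 0. In Peeling(σ, ς), let S be the returned prefix and ρ̂(S) the returned estimate. Then with probability at least 1 − 2·n^{−c}: |ρ̂(S) − ρ(S)| ≤ 2·ς·√((1+c)·log n), and ρ(S) ≥ ρ(S*_σ) − 2·ς·√((1+c)·log n). -/

import Mathlib

open scoped Classical
open MeasureTheory ProbabilityTheory
open scoped NNReal ENNReal

section Aux
open Real

lemma exp_mul_gaussianPDFReal' (s : ℝ) {v : ℝ≥0} (hv : v ≠ 0) (x : ℝ) :
    Real.exp (s * x) * gaussianPDFReal 0 v x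
      = Real.exp (s ^ 2 * v / 2) * gaussianPDFReal (s * v) v x := by
  have hv' : (0:ℝ) < (v:ℝ) := by
    have := hv; positivity
  unfold gaussianPDFReal
  rw [mul_left_comm, ← Real.exp_add, mul_left_comm, ← Real.exp_add]
  congr 1
  field_simp
  ring

lemma integrable_exp_gaussian' {Ω : Type*} [MeasurableSpace Ω] (μ : Measure Ω)
    [IsProbabilityMeasure μ] {X : Ω → ℝ} (hX : Measurable X) {v : ℝ≥0}
    (h : Measure.map X μ = gaussianReal 0 v) (s : ℝ) :
    Integrable (fun ω => Real.exp (s * X ω)) μ ∧ mgf X μ s = Real.exp (s ^ 2 * v / 2) := by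
  have hmeas : Measurable fun x : ℝ => Real.exp (s * x) := (measurable_id.const_mul s).exp
  have key : Integrable (fun x => Real.exp (s * x)) (gaussianReal 0 v) ∧
      ∫ x, Real.exp (s * x) ∂(gaussianReal 0 v) = Real.exp (s ^ 2 * v / 2) := by
    rcases eq_or_ne v 0 with rfl | hv
    · rw [gaussianReal_zero_var]
      have hae : ∀ᵐ x ∂(Measure.dirac (0:ℝ)), Real.exp (s * 0) = Real.exp (s * x) := by
        rw [ae_dirac_eq]; simp
      constructor
      · exact (integrable_const _).congr hae
      · simp [integral_dirac]
    · rw [gaussianReal_of_var_ne_zero _ hv]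
      have hpdf : (gaussianPDF 0 v) = fun x => ((Real.toNNReal (gaussianPDFReal 0 v x) : ℝ≥0) : ℝ≥0∞) := by
        funext x; rfl
      constructor
      · rw [integrable_withDensity_iff (measurable_gaussianPDF 0 v)
          (Filter.Eventually.of_forall fun x => ENNReal.ofReal_lt_top)]
        have : (fun x => Real.exp (s * x) * (gaussianPDF 0 v x).toReal)
            = fun x => Real.exp (s ^ 2 * v / 2) * gaussianPDFReal (s * v) v x := by
          funext x
          rw [gaussianPDF, ENNReal.toReal_ofReal (gaussianPDFReal_nonneg _ _ _),
            exp_mul_gaussianPDFReal' s hv]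
        rw [this]
        exact (integrable_gaussianPDFReal _ _).const_mul _
      · rw [hpdf, integral_withDensity_eq_integral_smul
          ((measurable_gaussianPDFReal 0 v).real_toNNReal)]
        have : (fun x => (Real.toNNReal (gaussianPDFReal 0 v x)) • Real.exp (s * x))
            = fun x => Real.exp (s ^ 2 * v / 2) * gaussianPDFReal (s * v) v x := by
          funext x
          rw [NNReal.smul_def, smul_eq_mul, Real.coe_toNNReal _ (gaussianPDFReal_nonneg _ _ _),
            mul_comm, exp_mul_gaussianPDFReal' s hv]
        rw [this, integral_const_mul, integral_gaussianPDFReal_eq_one _ hv, mul_one]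
  refine ⟨?_, ?_⟩
  · have := key.1
    rw [← h] at this
    exact (integrable_map_measure hmeas.aestronglyMeasurable hX.aemeasurable).mp this
  · rw [mgf, ← integral_map hX.aemeasurable hmeas.aestronglyMeasurable, h, key.2]

lemma weighted_gaussian_tail' {Ω : Type} [MeasurableSpace Ω] (μ : Measure Ω)
    [IsProbabilityMeasure μ] {n : ℕ} {N : Fin n → Ω → ℝ}
    (hNmeas : ∀ v, Measurable (N v))
    (hNindep : iIndepFun N μ)
    {ς : ℝ} (hς : 0 < ς)
    (hNdist : ∀ v, Measure.map (N v) μ = gaussianReal 0 ⟨ς ^ 2, sq_nonneg ς⟩)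
    (a : Fin n → ℝ) (ha : ∑ v, a v ^ 2 ≤ 1) {t : ℝ} (ht : 0 ≤ t) :
    (μ {ω | t ≤ ∑ v, a v * N v ω}).toReal ≤ Real.exp (-t ^ 2 / (2 * ς ^ 2)) := by
  set X : Fin n → Ω → ℝ := fun v ω => a v * N v ω with hXdef
  have hXmeas : ∀ v, Measurable (X v) := fun v => (hNmeas v).const_mul _
  have hXindep : iIndepFun X μ := by
    have := hNindep.comp (fun v (y : ℝ) => a v * y) (fun v => measurable_id.const_mul _)
    exact this
  have hXdist : ∀ v, Measure.map (X v) μ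
      = gaussianReal 0 (⟨(a v) ^ 2, sq_nonneg _⟩ * ⟨ς ^ 2, sq_nonneg ς⟩) := by
    intro v
    have hg : Measurable fun y : ℝ => a v * y := by fun_prop
    have h1 : Measure.map ((fun y : ℝ => a v * y) ∘ N v) μ
        = Measure.map (fun y : ℝ => a v * y) (Measure.map (N v) μ) :=
      (Measure.map_map hg (hNmeas v)).symm
    show Measure.map ((fun y : ℝ => a v * y) ∘ N v) μ = _
    rw [h1, hNdist v]
    exact (gaussianReal_map_const_mul (a v)).trans (by rw [mul_zero]; rfl)
  set s : ℝ := t / ς ^ 2 with hsdef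
  have hs : 0 ≤ s := div_nonneg ht (by positivity)
  have hint : ∀ v : Fin n, Integrable (fun ω => Real.exp (s * X v ω)) μ := fun v =>
    (integrable_exp_gaussian' μ (hXmeas v) (hXdist v) s).1
  have hintS : Integrable (fun ω => Real.exp (s * (∑ v, X v) ω)) μ :=
    hXindep.integrable_exp_mul_sum hXmeas (fun v _ => hint v)
  have hmgf : mgf (∑ v, X v) μ s = Real.exp (s ^ 2 * ς ^ 2 * (∑ v, a v ^ 2) / 2) := by
    rw [hXindep.mgf_sum hXmeas]
    have : ∀ v : Fin n, mgf (X v) μ s = Real.exp (s ^ 2 * ((a v) ^ 2 * ς ^ 2) / 2) := by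
      intro v
      have h2 := (integrable_exp_gaussian' μ (hXmeas v) (hXdist v) s).2
      rw [h2]
      norm_num
      exact Or.inl rfl
    rw [Finset.prod_congr rfl fun v _ => this v, ← Real.exp_sum]
    congr 1
    rw [Finset.sum_congr rfl (fun v _ => by ring :
      ∀ v ∈ Finset.univ, s ^ 2 * (a v ^ 2 * ς ^ 2) / 2 = s ^ 2 * ς ^ 2 / 2 * a v ^ 2),
      ← Finset.mul_sum]
    ring
  have hset : {ω | t ≤ ∑ v, a v * N v ω} = {ω | t ≤ (∑ v, X v) ω} := by
    ext ω; simp [hXdef]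
  rw [hset]
  calc (μ {ω | t ≤ (∑ v, X v) ω}).toReal
      ≤ Real.exp (-s * t) * mgf (∑ v, X v) μ s :=
        measure_ge_le_exp_mul_mgf t hs hintS
    _ ≤ Real.exp (-t ^ 2 / (2 * ς ^ 2)) := by
        rw [hmgf, ← Real.exp_add]
        apply Real.exp_le_exp.2
        have h1 : s ^ 2 * ς ^ 2 * (∑ v, a v ^ 2) / 2 ≤ s ^ 2 * ς ^ 2 / 2 := by
          have : s ^ 2 * ς ^ 2 * (∑ v, a v ^ 2) ≤ s ^ 2 * ς ^ 2 * 1 := by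
            apply mul_le_mul_of_nonneg_left ha (by positivity)
          linarith
        have h2 : -s * t + s ^ 2 * ς ^ 2 / 2 = -t ^ 2 / (2 * ς ^ 2) := by
          rw [hsdef]; field_simp; ring
        linarith

end Aux

/-- Number of edges of `G` with both endpoints in `S` (each edge counted once). -/
noncomputable def edgeCount {n : ℕ} (G : SimpleGraph (Fin n)) (S : Finset (Fin n)) : ℕ :=
  ((S ×ˢ S).filter fun p => G.Adj p.1 p.2 ∧ p.1 < p.2).card

/-- Density `ρ(S) = |E(S)|/|S|`. -/
noncomputable def density {n : ℕ} (G : SimpleGraph (Fin n)) (S : Finset (Fin n)) : ℝ :=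
  (edgeCount G S : ℝ) / (S.card : ℝ)

/-- `q(σ)_v`: the number of edges `{u,v}` of `G` with `u` preceding `v` in the
permutation `σ` (where `u` precedes `v` iff `σ u < σ v`). -/
noncomputable def qPerm {n : ℕ} (G : SimpleGraph (Fin n)) (σ : Equiv.Perm (Fin n))
    (v : Fin n) : ℕ :=
  (Finset.univ.filter fun u => G.Adj u v ∧ σ u < σ v).card

/-- The prefix `S^σ_x = {u ∈ V : u ⪯_σ x}` of the permutation `σ`. -/
noncomputable def prefixPerm {n : ℕ} (σ : Equiv.Perm (Fin n)) (x : Fin n) :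
    Finset (Fin n) :=
  Finset.univ.filter fun u => σ u ≤ σ x

/-- The noisy density estimate `ρ̂(S^σ_x) = (Σ_{v ⪯_σ x} (q(σ)_v + N_v))/|S^σ_x|`
computed by Peeling from the noisy reports `q̂(σ)_v = q(σ)_v + N_v`. -/
noncomputable def estDensity {n : ℕ} (G : SimpleGraph (Fin n)) (σ : Equiv.Perm (Fin n))
    (noise : Fin n → ℝ) (x : Fin n) : ℝ :=
  (∑ v ∈ prefixPerm σ x, ((qPerm G σ v : ℝ) + noise v)) / ((prefixPerm σ x).card : ℝ)

section Comb

lemma mem_prefixPerm' {n : ℕ} {σ : Equiv.Perm (Fin n)} {x u : Fin n} :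
    u ∈ prefixPerm σ x ↔ σ u ≤ σ x := by simp [prefixPerm]

lemma self_mem_prefixPerm' {n : ℕ} (σ : Equiv.Perm (Fin n)) (x : Fin n) :
    x ∈ prefixPerm σ x := mem_prefixPerm'.2 le_rfl

lemma prefixPerm_subset' {n : ℕ} {σ : Equiv.Perm (Fin n)} {x y : Fin n} (h : σ x ≤ σ y) :
    prefixPerm σ x ⊆ prefixPerm σ y := fun u hu =>
  mem_prefixPerm'.2 (le_trans (mem_prefixPerm'.1 hu) h)

lemma sum_qPerm' {n : ℕ} (G : SimpleGraph (Fin n)) (σ : Equiv.Perm (Fin n)) (x : Fin n) :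
    ∑ v ∈ prefixPerm σ x, qPerm G σ v = edgeCount G (prefixPerm σ x) := by
  set P := prefixPerm σ x with hP
  set A := (P ×ˢ P).filter fun p => G.Adj p.1 p.2 ∧ σ p.1 < σ p.2 with hA
  have step1 : ∑ v ∈ P, qPerm G σ v = A.card := by
    rw [Finset.card_eq_sum_card_fiberwise (f := Prod.snd) (t := P)
      (fun p hp => (Finset.mem_product.1 (Finset.mem_filter.1 hp).1).2)]
    refine Finset.sum_congr rfl fun v hv => ?_
    have fiber : A.filter (fun p => p.2 = v)
        = (Finset.univ.filter fun u => G.Adj u v ∧ σ u < σ v).image (fun u => (u, v)) := by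
      ext p
      simp only [Finset.mem_filter, Finset.mem_image, hA, Finset.mem_product, Finset.mem_univ,
        true_and]
      constructor
      · rintro ⟨⟨⟨hp1, hp2⟩, hadj, hσ⟩, h2⟩
        exact ⟨p.1, ⟨by rwa [h2] at hadj, by rwa [h2] at hσ⟩, by rw [← h2]⟩
      · rintro ⟨u, ⟨hadj, hσ⟩, rfl⟩
        exact ⟨⟨⟨mem_prefixPerm'.2 (le_trans hσ.le (mem_prefixPerm'.1 hv)), hv⟩, hadj, hσ⟩, rfl⟩
    rw [qPerm, fiber, Finset.card_image_of_injective _ (fun u w h => congrArg Prod.fst h)]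
  have step2 : A.card = edgeCount G P := by
    rw [edgeCount]
    refine Finset.card_bij' (fun p _ => if p.1 < p.2 then p else p.swap)
      (fun q _ => if σ q.1 < σ q.2 then q else q.swap) ?_ ?_ ?_ ?_
    · intro p hp
      simp only [hA, Finset.mem_filter, Finset.mem_product] at hp ⊢
      obtain ⟨⟨h1, h2⟩, hadj, hσ⟩ := hp
      have hne : p.1 ≠ p.2 := hadj.ne
      by_cases hlt : p.1 < p.2
      · simp [hlt, h1, h2, hadj]
      · have : p.2 < p.1 := lt_of_le_of_ne (le_of_not_gt hlt) (Ne.symm hne)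
        simp [hlt, Prod.swap, h1, h2, hadj.symm, this]
    · intro q hq
      simp only [Finset.mem_filter, Finset.mem_product] at hq
      obtain ⟨⟨h1, h2⟩, hadj, hlt⟩ := hq
      have hσne : σ q.1 ≠ σ q.2 := fun h => hadj.ne (σ.injective h)
      by_cases hσlt : σ q.1 < σ q.2
      · show (if σ q.1 < σ q.2 then q else q.swap) ∈ A
        rw [if_pos hσlt]
        simp only [hA, Finset.mem_filter, Finset.mem_product]
        exact ⟨⟨h1, h2⟩, hadj, hσlt⟩
      · have : σ q.2 < σ q.1 := lt_of_le_of_ne (le_of_not_gt hσlt) (Ne.symm hσne)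
        show (if σ q.1 < σ q.2 then q else q.swap) ∈ A
        rw [if_neg hσlt]
        simp only [hA, Finset.mem_filter, Finset.mem_product, Prod.fst_swap, Prod.snd_swap]
        exact ⟨⟨h2, h1⟩, hadj.symm, this⟩
    · intro p hp
      simp only [hA, Finset.mem_filter, Finset.mem_product] at hp
      obtain ⟨⟨h1, h2⟩, hadj, hσ⟩ := hp
      by_cases hlt : p.1 < p.2
      · simp [hlt, hσ]
      · simp only [hlt, if_false, Prod.fst_swap, Prod.snd_swap]
        rw [if_neg (not_lt.2 hσ.le), Prod.swap_swap]
    · intro q hq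
      simp only [Finset.mem_filter, Finset.mem_product] at hq
      obtain ⟨⟨h1, h2⟩, hadj, hlt⟩ := hq
      by_cases hσlt : σ q.1 < σ q.2
      · simp [hσlt, hlt]
      · simp only [hσlt, if_false, Prod.fst_swap, Prod.snd_swap]
        rw [if_neg (not_lt.2 hlt.le), Prod.swap_swap]
  rw [step1, step2]

lemma coef_single_sq' {n : ℕ} (P : Finset (Fin n)) (hP : P.Nonempty) :
    ∑ v, (if v ∈ P then ((P.card : ℝ))⁻¹ else 0) ^ 2 ≤ 1 := by
  have hp : (0:ℝ) < P.card := by exact_mod_cast Finset.card_pos.2 hP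
  have : ∑ v, (if v ∈ P then ((P.card : ℝ))⁻¹ else 0) ^ 2
      = ∑ v ∈ P, ((P.card : ℝ))⁻¹ ^ 2 := by
    rw [← Finset.sum_subset (Finset.subset_univ P) (fun v _ hv => by rw [if_neg hv]; ring)]
    exact Finset.sum_congr rfl fun v hv => by rw [if_pos hv]
  rw [this, Finset.sum_const, nsmul_eq_mul]
  rw [inv_pow, ← div_eq_mul_inv]
  rw [div_le_one (by positivity)]
  have h1 : (1:ℝ) ≤ P.card := by exact_mod_cast Finset.card_pos.2 hP
  nlinarith

lemma coef_diff_sq' {n : ℕ} (P Q : Finset (Fin n)) (hPQ : P ⊆ Q) (hP : P.Nonempty) :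
    ∑ v, ((if v ∈ P then ((P.card : ℝ))⁻¹ else 0) - (if v ∈ Q then ((Q.card : ℝ))⁻¹ else 0)) ^ 2
      ≤ 1 := by
  have hQ : Q.Nonempty := hP.mono hPQ
  have hp : (0:ℝ) < P.card := by exact_mod_cast Finset.card_pos.2 hP
  have hq : (0:ℝ) < Q.card := by exact_mod_cast Finset.card_pos.2 hQ
  set α : ℝ := ((P.card : ℝ))⁻¹
  set β : ℝ := ((Q.card : ℝ))⁻¹
  have hsum : ∑ v, ((if v ∈ P then α else 0) - (if v ∈ Q then β else 0)) ^ 2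
      = ∑ v ∈ Q, ((if v ∈ P then α else 0) - β) ^ 2 := by
    rw [← Finset.sum_subset (Finset.subset_univ Q)]
    · refine Finset.sum_congr rfl fun v hv => by rw [if_pos hv]
    · intro v _ hv
      rw [if_neg hv, if_neg (fun h => hv (hPQ h))]
      ring
  have hsplit : ∑ v ∈ Q, ((if v ∈ P then α else 0) - β) ^ 2
      = ∑ v ∈ P, (α - β) ^ 2 + ∑ v ∈ Q \ P, (0 - β) ^ 2 := by
    rw [← Finset.sum_sdiff hPQ, add_comm]
    congr 1
    · exact Finset.sum_congr rfl fun v hv => by rw [if_pos hv]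
    · exact Finset.sum_congr rfl fun v hv => by rw [if_neg (Finset.mem_sdiff.1 hv).2]
  rw [hsum, hsplit, Finset.sum_const, Finset.sum_const, Finset.card_sdiff_of_subset hPQ,
    nsmul_eq_mul, nsmul_eq_mul]
  have hcard : (P.card : ℝ) ≤ Q.card := by exact_mod_cast Finset.card_le_card hPQ
  have hc : ((Q.card - P.card : ℕ) : ℝ) = (Q.card : ℝ) - P.card := by
    exact_mod_cast Nat.cast_sub (Finset.card_le_card hPQ)
  rw [hc]
  have hαβ : (P.card : ℝ) * (α - β) ^ 2 + ((Q.card : ℝ) - P.card) * (0 - β) ^ 2 = α - β := by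
    field_simp [α, β]
    have hPα : (P.card : ℝ) * α = 1 := mul_inv_cancel₀ hp.ne'
    have hQβ : (Q.card : ℝ) * β = 1 := mul_inv_cancel₀ hq.ne'
    linear_combination (α - 2 * β) * hPα + β * hQβ
  rw [hαβ]
  have : α ≤ 1 := by
    rw [inv_le_one_iff₀]
    right
    exact_mod_cast Finset.card_pos.2 hP
  have hβ0 : 0 ≤ β := by positivity
  linarith

end Comb

theorem peeling_utility
    {Ω : Type} [MeasurableSpace Ω] (μpr : Measure Ω) [IsProbabilityMeasure μpr]
    {n : ℕ} (hn : 2 ≤ n) (G : SimpleGraph (Fin n)) (σ : Equiv.Perm (Fin n))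
    (ς c : ℝ) (hς : 0 < ς) (hc : 0 < c)
    (N : Fin n → Ω → ℝ)
    (hNmeas : ∀ v, Measurable (N v))
    (hNindep : iIndepFun N μpr)
    (hNdist : ∀ v, Measure.map (N v) μpr = gaussianReal 0 ⟨ς ^ 2, sq_nonneg ς⟩) :
    1 - 2 * (n : ℝ) ^ (-c) ≤
      (μpr {ω | ∀ u : Fin n,
        (∀ x : Fin n, estDensity G σ (fun v => N v ω) x ≤ estDensity G σ (fun v => N v ω) u) →
          |estDensity G σ (fun v => N v ω) u - density G (prefixPerm σ u)| ≤
              2 * ς * Real.sqrt ((1 + c) * Real.log n) ∧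
            (⨆ x, density G (prefixPerm σ x)) - 2 * ς * Real.sqrt ((1 + c) * Real.log n) ≤
              density G (prefixPerm σ u)}).toReal := by
  have hnpos : (0:ℝ) < n := by positivity
  have hn1 : (1:ℝ) < n := by exact_mod_cast hn
  have hlog : 0 < Real.log n := Real.log_pos hn1
  set L : ℝ := (1 + c) * Real.log n with hLdef
  have hL : 0 < L := by positivity
  set B : ℝ := 2 * ς * Real.sqrt L with hBdef
  have hB : 0 ≤ B := by positivity
  have hB2 : B ^ 2 = 4 * ς ^ 2 * L := by
    rw [hBdef, mul_pow, mul_pow, Real.sq_sqrt hL.le]; ring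
  have hNE : Nonempty (Fin n) := ⟨⟨0, by omega⟩⟩
  set P : Fin n → Finset (Fin n) := fun x => prefixPerm σ x with hPdef
  have hPne : ∀ x, (P x).Nonempty := fun x => ⟨x, self_mem_prefixPerm' σ x⟩
  set a : Fin n → Fin n → ℝ :=
    fun x v => if v ∈ P x then (((P x).card : ℝ))⁻¹ else 0 with hadef
  set M : Fin n → Ω → ℝ := fun x ω => ∑ v, a x v * N v ω with hMdef
  set dd : Fin n → ℝ := fun x => density G (P x) with hdddef
  have hMav : ∀ x ω, M x ω = (∑ v ∈ P x, N v ω) / (((P x).card : ℝ)) := by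
    intro x ω
    show (∑ v, a x v * N v ω) = _
    rw [div_eq_inv_mul, Finset.mul_sum]
    rw [← Finset.sum_subset (Finset.subset_univ (P x))
      (fun v _ hv => by simp only [hadef]; rw [if_neg hv, zero_mul])]
    exact Finset.sum_congr rfl fun v hv => by simp only [hadef]; rw [if_pos hv]
  have hest : ∀ ω x, estDensity G σ (fun v => N v ω) x = dd x + M x ω := by
    intro ω x
    rw [estDensity, Finset.sum_add_distrib, ← Nat.cast_sum, sum_qPerm', add_div, hMav]
    rfl
  obtain ⟨xs, -, hxs⟩ := Finset.exists_max_image Finset.univ dd ⟨Classical.arbitrary _,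
    Finset.mem_univ _⟩
  have hsup : (⨆ x, dd x) ≤ dd xs := ciSup_le fun x => hxs x (Finset.mem_univ x)
  set Good : Set Ω := ⋂ x, ({ω | M x ω ≤ B} ∩ {ω | -B ≤ M x ω} ∩ {ω | M x ω - M xs ω ≤ B})
    with hGooddef
  have hMmeas : ∀ x, Measurable (M x) := by
    intro x
    exact Finset.measurable_sum _ (fun v _ => (hNmeas v).const_mul _)
  have hGoodmeas : MeasurableSet Good :=
    MeasurableSet.iInter fun x =>
      (((measurableSet_le (hMmeas x) measurable_const)).inter
        (measurableSet_le measurable_const (hMmeas x))).inter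
      (measurableSet_le ((hMmeas x).sub (hMmeas xs)) measurable_const)
  set ε : ℝ := Real.exp (-(2 * L)) with hεdef
  have hεpos : 0 < ε := Real.exp_pos _
  have hexp : -B ^ 2 / (2 * ς ^ 2) = -(2 * L) := by
    rw [hB2]; field_simp; ring
  have tail : ∀ b : Fin n → ℝ, (∑ v, b v ^ 2 ≤ 1) →
      (μpr {ω | B ≤ ∑ v, b v * N v ω}).toReal ≤ ε := by
    intro b hb
    have := weighted_gaussian_tail' μpr hNmeas hNindep hς hNdist b hb hB
    rwa [hexp] at this
  have tail' : ∀ b : Fin n → ℝ, (∑ v, b v ^ 2 ≤ 1) →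
      μpr {ω | B ≤ ∑ v, b v * N v ω} ≤ ENNReal.ofReal ε := by
    intro b hb
    have h := tail b hb
    rw [← ENNReal.ofReal_toReal (measure_ne_top μpr _)]
    exact ENNReal.ofReal_le_ofReal h
  have hsq1 : ∀ x, ∑ v, a x v ^ 2 ≤ 1 := by
    intro x; simp only [hadef]; exact coef_single_sq' (P x) (hPne x)
  have hsqneg : ∀ x, ∑ v, (-(a x v)) ^ 2 ≤ 1 := by
    intro x
    calc ∑ v, (-(a x v)) ^ 2 = ∑ v, a x v ^ 2 :=
        Finset.sum_congr rfl fun v _ => by ring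
      _ ≤ 1 := hsq1 x
  have hsqdiff : ∀ x, ∑ v, (a x v - a xs v) ^ 2 ≤ 1 := by
    intro x
    by_cases h : σ x ≤ σ xs
    · simp only [hadef]
      exact coef_diff_sq' (P x) (P xs) (prefixPerm_subset' h) (hPne x)
    · have h' : σ xs ≤ σ x := le_of_not_ge h
      have := coef_diff_sq' (P xs) (P x) (prefixPerm_subset' h') (hPne xs)
      simp only [hadef]
      calc ∑ v, ((if v ∈ P x then (((P x).card : ℝ))⁻¹ else 0)
            - (if v ∈ P xs then (((P xs).card : ℝ))⁻¹ else 0)) ^ 2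
          = ∑ v, ((if v ∈ P xs then (((P xs).card : ℝ))⁻¹ else 0)
            - (if v ∈ P x then (((P x).card : ℝ))⁻¹ else 0)) ^ 2 :=
            Finset.sum_congr rfl fun v _ => by ring
        _ ≤ 1 := this
  have hbad : μpr Goodᶜ ≤ ENNReal.ofReal (3 * n * ε) := by
    have hsub : Goodᶜ ⊆ ⋃ x, ({ω | B ≤ ∑ v, a x v * N v ω}
        ∪ {ω | B ≤ ∑ v, (-(a x v)) * N v ω}
        ∪ {ω | B ≤ ∑ v, (a x v - a xs v) * N v ω}) := by
      intro ω hω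
      rw [hGooddef, Set.compl_iInter] at hω
      obtain ⟨Sx, ⟨x, rfl⟩, hx⟩ := hω
      refine Set.mem_iUnion.2 ⟨x, ?_⟩
      simp only [Set.compl_inter, Set.mem_union, Set.mem_compl_iff, Set.mem_setOf_eq] at hx ⊢
      rcases hx with (h | h) | h
      · exact Or.inl (Or.inl (le_of_lt (not_le.1 h)))
      · refine Or.inl (Or.inr ?_)
        have h1 : M x ω < -B := not_le.1 h
        have h2 : B ≤ -M x ω := by linarith
        have h3 : -M x ω = ∑ v, (-(a x v)) * N v ω := by
          show -(∑ v, a x v * N v ω) = _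
          rw [← Finset.sum_neg_distrib]
          exact Finset.sum_congr rfl fun v _ => by ring
        rw [h3] at h2
        exact h2
      · refine Or.inr ?_
        have h2 : B ≤ M x ω - M xs ω := le_of_lt (not_le.1 h)
        have h3 : M x ω - M xs ω = ∑ v, (a x v - a xs v) * N v ω := by
          show (∑ v, a x v * N v ω) - (∑ v, a xs v * N v ω) = _
          rw [← Finset.sum_sub_distrib]
          exact Finset.sum_congr rfl fun v _ => by ring
        rw [h3] at h2
        exact h2
    calc μpr Goodᶜ ≤ ∑ x : Fin n, μpr ({ω | B ≤ ∑ v, a x v * N v ω}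
          ∪ {ω | B ≤ ∑ v, (-(a x v)) * N v ω}
          ∪ {ω | B ≤ ∑ v, (a x v - a xs v) * N v ω}) :=
        le_trans (measure_mono hsub) (measure_iUnion_fintype_le μpr _)
      _ ≤ ∑ _x : Fin n, (ENNReal.ofReal ε + ENNReal.ofReal ε + ENNReal.ofReal ε) := by
          refine Finset.sum_le_sum fun x _ => ?_
          refine le_trans (measure_union_le _ _) ?_
          refine add_le_add (le_trans (measure_union_le _ _) ?_) (tail' _ (hsqdiff x))
          exact add_le_add (tail' _ (hsq1 x)) (tail' _ (hsqneg x))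
      _ = (n : ℝ≥0∞) * (ENNReal.ofReal ε + ENNReal.ofReal ε + ENNReal.ofReal ε) := by
          rw [Finset.sum_const, Finset.card_univ, Fintype.card_fin, nsmul_eq_mul]
      _ ≤ ENNReal.ofReal (3 * n * ε) := by
          rw [← ENNReal.ofReal_add (by positivity) (by positivity),
            ← ENNReal.ofReal_add (by positivity) (by positivity),
            ← ENNReal.ofReal_natCast n,
            ← ENNReal.ofReal_mul (by positivity)]
          apply ENNReal.ofReal_le_ofReal
          nlinarith [hεpos.le, hnpos.le]
  have hbadR : (μpr Goodᶜ).toReal ≤ 3 * n * ε :=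
    ENNReal.toReal_le_of_le_ofReal (by positivity) hbad
  have hincl : Good ⊆ {ω | ∀ u : Fin n,
      (∀ x : Fin n, estDensity G σ (fun v => N v ω) x ≤ estDensity G σ (fun v => N v ω) u) →
        |estDensity G σ (fun v => N v ω) u - density G (prefixPerm σ u)| ≤
            2 * ς * Real.sqrt ((1 + c) * Real.log n) ∧
          (⨆ x, density G (prefixPerm σ x)) - 2 * ς * Real.sqrt ((1 + c) * Real.log n) ≤
            density G (prefixPerm σ u)} := by
    intro ω hω
    have hg : ∀ x, M x ω ≤ B ∧ -B ≤ M x ω ∧ M x ω - M xs ω ≤ B := by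
      intro x
      have := Set.mem_iInter.1 hω x
      exact ⟨this.1.1, this.1.2, this.2⟩
    intro u hu
    have he1 := hest ω u
    have he2 := hest ω xs
    have huxs := hu xs
    constructor
    · rw [he1]
      have heq : dd u + M u ω - density G (prefixPerm σ u) = M u ω := by
        show dd u + M u ω - dd u = M u ω
        ring
      rw [heq]
      exact abs_le.2 ⟨(hg u).2.1, (hg u).1⟩
    · have hchain : dd xs - B ≤ dd u := by
        have h3 := (hg u).2.2
        rw [he1, he2] at huxs
        linarith
      show (⨆ x, dd x) - B ≤ dd u
      linarith [hsup, hchain]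
  have hGoodLB : 1 - 3 * n * ε ≤ (μpr Good).toReal := by
    have hadd : μpr Good + μpr Goodᶜ = 1 := by
      rw [measure_add_measure_compl hGoodmeas, measure_univ]
    have hT : (μpr Good).toReal + (μpr Goodᶜ).toReal = 1 := by
      rw [← ENNReal.toReal_add (measure_ne_top _ _) (measure_ne_top _ _), hadd]
      rfl
    linarith
  have hmono : (μpr Good).toReal ≤ (μpr _).toReal :=
    ENNReal.toReal_mono (measure_ne_top μpr _) (measure_mono hincl)
  refine le_trans ?_ (le_trans hGoodLB hmono)
  have hεval : ε = (n:ℝ) ^ (-(2 * (1 + c))) := by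
    rw [hεdef, Real.rpow_def_of_pos hnpos, hLdef]
    congr 1
    ring
  have hkey : 3 * n * ε ≤ 2 * (n:ℝ) ^ (-c) := by
    rw [hεval]
    have h1 : (n:ℝ) * (n:ℝ) ^ (-(2 * (1 + c))) = (n:ℝ) ^ (1 + -(2 * (1 + c))) := by
      rw [Real.rpow_add hnpos, Real.rpow_one]
    have hadd2 : (n:ℝ) ^ (-c) * (n:ℝ) ^ (-1 - c : ℝ) = (n:ℝ) ^ (1 + -(2 * (1 + c))) := by
      rw [← Real.rpow_add hnpos]
      congr 1
      ring
    have h2 : 3 * ((n:ℝ) * (n:ℝ) ^ (-(2 * (1 + c))))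
        = 3 * ((n:ℝ) ^ (-c) * (n:ℝ) ^ (-1 - c : ℝ)) := by
      rw [h1, hadd2]
    have h3 : (n:ℝ) ^ (-1 - c : ℝ) ≤ (n:ℝ) ^ (-1 : ℝ) :=
      Real.rpow_le_rpow_of_exponent_le hn1.le (by linarith)
    have h4 : (n:ℝ) ^ (-1 : ℝ) ≤ 1/2 := by
      rw [Real.rpow_neg_one]
      rw [inv_le_comm₀ hnpos (by norm_num)]
      norm_num
      exact_mod_cast hn
    have h5 : 0 < (n:ℝ) ^ (-c : ℝ) := Real.rpow_pos_of_pos hnpos _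
    calc 3 * (n:ℝ) * (n:ℝ) ^ (-(2 * (1 + c)))
        = 3 * ((n:ℝ) ^ (-c) * (n:ℝ) ^ (-1 - c : ℝ)) := by rw [← h2]; ring
      _ ≤ 3 * ((n:ℝ) ^ (-c) * (1/2)) := by
          apply mul_le_mul_of_nonneg_left
            (mul_le_mul_of_nonneg_left (le_trans h3 h4) h5.le) (by norm_num)
      _ ≤ 2 * (n:ℝ) ^ (-c) := by nlinarith
  linarith
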